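/- arXiv:2309.12659 — 2 statements merged into one kernel-verified Lean document; each statement's English description precedes it below -/
import Mathlib

section
/- Let p₁,…,p_d ≥ 0 with ∑ᵢ pᵢ = 1 and let ℓ₁,…,ℓ_d and η > 0 satisfy η·ℓᵢ ∈ [0,1] for all i. Then log(∑ᵢ pᵢ exp(-η ℓᵢ)) ≤ -η ∑ᵢ pᵢ ℓᵢ + η²/2 · ∑ᵢ pᵢ ℓᵢ². -/
lemma exp_neg_le_quad (x : ℝ) (h0 : 0 ≤ x) (h1 : x ≤ 1) :
    Real.exp (-x) ≤ 1 - x + x ^ 2 / 2 := by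
  have habs : |(-x)| ≤ 1 := by rw [abs_neg, abs_of_nonneg h0]; exact h1
  have hb := Real.exp_bound habs (n := 4) (by norm_num)
  simp [Finset.sum_range_succ] at hb
  have h := abs_le.mp hb
  have h2 := h.2
  rw [abs_of_nonneg h0] at h2
  simp [Nat.factorial] at h2
  nlinarith [pow_nonneg h0 3, pow_nonneg h0 4]

theorem log_sum_exp_step (d : ℕ) (p ℓ : Fin d → ℝ) (η : ℝ) (hη : 0 < η)
    (hp : ∀ i, 0 ≤ p i) (hps : ∑ i, p i = 1)
    (hℓ : ∀ i, 0 ≤ η * ℓ i ∧ η * ℓ i ≤ 1) :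
    Real.log (∑ i, p i * Real.exp (-η * ℓ i)) ≤
      -η * ∑ i, p i * ℓ i + η ^ 2 / 2 * ∑ i, p i * ℓ i ^ 2 := by
  set S := ∑ i, p i * Real.exp (-η * ℓ i) with hS
  have hterm : ∀ i, p i * Real.exp (-1) ≤ p i * Real.exp (-η * ℓ i) := by
    intro i
    exact mul_le_mul_of_nonneg_left
      (Real.exp_le_exp.mpr (by linarith [(hℓ i).2])) (hp i)
  have hSpos : 0 < S := by
    have : (Real.exp (-1)) = ∑ i, p i * Real.exp (-1) := by
      rw [← Finset.sum_mul, hps, one_mul]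
    calc (0:ℝ) < Real.exp (-1) := Real.exp_pos _
      _ = ∑ i, p i * Real.exp (-1) := this
      _ ≤ S := Finset.sum_le_sum fun i _ => hterm i
  have hlog := Real.log_le_sub_one_of_pos hSpos
  have hSle : S ≤ 1 - η * ∑ i, p i * ℓ i + η ^ 2 / 2 * ∑ i, p i * ℓ i ^ 2 := by
    have hbound : ∀ i ∈ Finset.univ, p i * Real.exp (-η * ℓ i) ≤
        p i * (1 - η * ℓ i + (η * ℓ i) ^ 2 / 2) := by
      intro i _
      refine mul_le_mul_of_nonneg_left ?_ (hp i)
      have := exp_neg_le_quad (η * ℓ i) (hℓ i).1 (hℓ i).2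
      rw [neg_mul]
      exact this
    calc S ≤ ∑ i, p i * (1 - η * ℓ i + (η * ℓ i) ^ 2 / 2) :=
        Finset.sum_le_sum hbound
      _ = ∑ i, (p i - η * (p i * ℓ i) + η ^ 2 / 2 * (p i * ℓ i ^ 2)) := by
        apply Finset.sum_congr rfl; intros; ring
      _ = 1 - η * ∑ i, p i * ℓ i + η ^ 2 / 2 * ∑ i, p i * ℓ i ^ 2 := by
        rw [Finset.sum_add_distrib, Finset.sum_sub_distrib, ← Finset.mul_sum, ← Finset.mul_sum,
          hps]
  linarith
end

section
/- Consider d experts with nonnegative losses ℓ_{t,i} for t = 1,…,T satisfying η·ℓ_{t,i} ∈ [0,1] and ∑ᵢ p_{t,i} ℓ_{t,i}² ≤ 1 at each step, where the exponentially weighted forecaster maintains unnormalized weights w_{1,i} = 1 and w_{t+1,i} = w_{t,i}·exp(-η ℓ_{t,i}), with normalized weights p_{t,i} = w_{t,i} / ∑_j w_{t,j}. Then for every expert k: ∑_{t=1}^T ∑_{i=1}^d p_{t,i} ℓ_{t,i} - ∑_{t=1}^T ℓ_{t,k} ≤ η T / 2 + log(d)/η. -/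
lemma exp_neg_quad (x : ℝ) (hx : 0 ≤ x) : Real.exp (-x) ≤ 1 - x + x ^ 2 / 2 := by
  set f : ℝ → ℝ := fun y => 1 - y + y ^ 2 / 2 - Real.exp (-y) with hf
  have H : ∀ y : ℝ, HasDerivAt f (y - 1 + Real.exp (-y)) y := by
    intro y
    have h1 : HasDerivAt (fun y : ℝ => -y) (-1) y := (hasDerivAt_id y).neg
    have h2 : HasDerivAt (fun y : ℝ => Real.exp (-y)) (Real.exp (-y) * (-1)) y :=
      (Real.hasDerivAt_exp (-y)).comp y h1
    have h3 : HasDerivAt (fun y : ℝ => y ^ 2 / 2) y y := by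
      simpa using (hasDerivAt_pow 2 y).div_const 2
    have h4 : HasDerivAt (fun y : ℝ => 1 - y + y ^ 2 / 2) (0 - 1 + y) y :=
      ((hasDerivAt_const y (1:ℝ)).sub (hasDerivAt_id y)).add h3
    have := h4.sub h2
    exact this.congr_deriv (by ring)
  have hmono : MonotoneOn f (Set.Ici (0:ℝ)) := by
    apply monotoneOn_of_deriv_nonneg (convex_Ici 0)
      (Continuous.continuousOn (by continuity))
    · intro y hy
      exact (H y).differentiableAt.differentiableWithinAt
    · intro y hy
      rw [(H y).deriv]
      have := Real.add_one_le_exp (-y)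
      linarith
  have h0 : f 0 = 0 := by simp [hf]
  have := hmono (Set.self_mem_Ici) hx hx
  rw [h0] at this
  simp only [hf] at this
  linarith

theorem egd_regret_bound (d T : ℕ) (η : ℝ) (hη : 0 < η)
    (ℓ : ℕ → Fin d → ℝ) (w p : ℕ → Fin d → ℝ)
    (hw0 : ∀ i, w 0 i = 1)
    (hwrec : ∀ t i, w (t + 1) i = w t i * Real.exp (-η * ℓ t i))
    (hp : ∀ t i, p t i = w t i / ∑ j, w t j)
    (hℓ0 : ∀ t i, 0 ≤ ℓ t i)
    (hℓη : ∀ t, t < T → ∀ i, 0 ≤ η * ℓ t i ∧ η * ℓ t i ≤ 1)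
    (hsq : ∀ t, t < T → ∑ i, p t i * ℓ t i ^ 2 ≤ 1) :
    ∀ k : Fin d,
      ∑ t ∈ Finset.range T, ∑ i, p t i * ℓ t i - ∑ t ∈ Finset.range T, ℓ t k ≤
        η * T / 2 + Real.log d / η := by
  intro k
  haveI : Nonempty (Fin d) := ⟨k⟩
  have hd : 0 < d := Fin.pos k
  set Z : ℕ → ℝ := fun t => ∑ j, w t j with hZ
  have hwpos : ∀ t i, 0 < w t i := by
    intro t
    induction t with
    | zero => intro i; rw [hw0]; norm_num
    | succ n ih => intro i; rw [hwrec]; exact mul_pos (ih i) (Real.exp_pos _)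
  have hZpos : ∀ t, 0 < Z t := fun t => Finset.sum_pos (fun i _ => hwpos t i) ⟨k, Finset.mem_univ k⟩
  have hpsum : ∀ t, ∑ i, p t i = 1 := by
    intro t
    simp only [hp]
    rw [← Finset.sum_div, div_self (hZpos t).ne']
  have hppos : ∀ t i, 0 < p t i := by
    intro t i; rw [hp]; exact div_pos (hwpos t i) (hZpos t)
  -- single step bound
  have step : ∀ t, t < T →
      Real.log (Z (t + 1)) ≤ Real.log (Z t) + (-(η * ∑ i, p t i * ℓ t i) + η ^ 2 / 2) := by
    intro t ht
    have hZrec : Z (t + 1) = Z t * ∑ i, p t i * Real.exp (-η * ℓ t i) := by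
      simp only [hZ, Finset.mul_sum, hp]
      apply Finset.sum_congr rfl
      intro i _
      rw [hwrec]
      have hZne : (∑ j : Fin d, w t j) ≠ 0 := (hZpos t).ne'
      field_simp
    have hSpos : 0 < ∑ i, p t i * Real.exp (-η * ℓ t i) :=
      Finset.sum_pos (fun i _ => mul_pos (hppos t i) (Real.exp_pos _)) ⟨k, Finset.mem_univ k⟩
    rw [hZrec, Real.log_mul (hZpos t).ne' hSpos.ne']
    have hlog : Real.log (∑ i, p t i * Real.exp (-η * ℓ t i)) ≤
        (∑ i, p t i * Real.exp (-η * ℓ t i)) - 1 := Real.log_le_sub_one_of_pos hSpos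
    have hS : (∑ i, p t i * Real.exp (-η * ℓ t i)) ≤
        ∑ i, p t i * (1 - η * ℓ t i + (η * ℓ t i) ^ 2 / 2) := by
      apply Finset.sum_le_sum
      intro i _
      apply mul_le_mul_of_nonneg_left _ (hppos t i).le
      have := exp_neg_quad (η * ℓ t i) (hℓη t ht i).1
      rw [neg_mul]
      exact this
    have hexp : ∑ i, p t i * (1 - η * ℓ t i + (η * ℓ t i) ^ 2 / 2) =
        (∑ i, p t i) - η * (∑ i, p t i * ℓ t i) + η ^ 2 / 2 * (∑ i, p t i * ℓ t i ^ 2) := by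
      rw [Finset.mul_sum, Finset.mul_sum, ← Finset.sum_sub_distrib, ← Finset.sum_add_distrib]
      exact Finset.sum_congr rfl fun i _ => by ring
    rw [hpsum t] at hexp
    have hsq' := hsq t ht
    have hsum_le : (∑ i, p t i * Real.exp (-η * ℓ t i)) - 1 ≤
        -(η * ∑ i, p t i * ℓ t i) + η ^ 2 / 2 := by
      have h2 : 0 ≤ η ^ 2 / 2 := by positivity
      nlinarith [hS, hexp]
    linarith
  -- telescoping
  have tele : ∀ n, n ≤ T → Real.log (Z n) ≤ Real.log (Z 0) +
      ∑ t ∈ Finset.range n, (-(η * ∑ i, p t i * ℓ t i) + η ^ 2 / 2) := by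
    intro n
    induction n with
    | zero => intro _; simp
    | succ m ih =>
      intro hm
      have h1 := ih (Nat.le_of_succ_le hm)
      have h2 := step m (Nat.lt_of_succ_le hm)
      rw [Finset.sum_range_succ]
      linarith
  -- lower bound via expert k
  have hwk : ∀ n, w n k = Real.exp (-η * ∑ t ∈ Finset.range n, ℓ t k) := by
    intro n
    induction n with
    | zero => simp [hw0]
    | succ m ih =>
      rw [hwrec, ih, ← Real.exp_add, Finset.sum_range_succ]
      ring_nf
  have hlow : -η * ∑ t ∈ Finset.range T, ℓ t k ≤ Real.log (Z T) := by
    have h1 : w T k ≤ Z T :=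
      Finset.single_le_sum (fun i _ => (hwpos T i).le) (Finset.mem_univ k)
    calc -η * ∑ t ∈ Finset.range T, ℓ t k = Real.log (w T k) := by rw [hwk, Real.log_exp]
      _ ≤ Real.log (Z T) := Real.log_le_log (hwpos T k) h1
  have hZ0 : Real.log (Z 0) = Real.log d := by
    simp only [hZ, hw0]
    simp
  have hsum : ∑ t ∈ Finset.range T, (-(η * ∑ i, p t i * ℓ t i) + η ^ 2 / 2) =
      -(η * ∑ t ∈ Finset.range T, ∑ i, p t i * ℓ t i) + T * (η ^ 2 / 2) := by
    have hneg : ∑ x ∈ Finset.range T, -(η * ∑ i, p x i * ℓ x i) =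
        -(η * ∑ t ∈ Finset.range T, ∑ i, p t i * ℓ t i) := by
      rw [Finset.sum_neg_distrib, Finset.mul_sum]
    rw [Finset.sum_add_distrib, hneg, Finset.sum_const, Finset.card_range, nsmul_eq_mul]
  have key := tele T le_rfl
  rw [hZ0, hsum] at key
  set A := ∑ t ∈ Finset.range T, ∑ i, p t i * ℓ t i
  set L := ∑ t ∈ Finset.range T, ℓ t k
  have hmain : η * (A - L) ≤ Real.log d + T * (η ^ 2 / 2) := by nlinarith [hlow, key]
  have hfin : A - L ≤ (Real.log d + T * (η ^ 2 / 2)) / η := by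
    rw [le_div_iff₀ hη]; nlinarith
  calc A - L ≤ (Real.log d + T * (η ^ 2 / 2)) / η := hfin
    _ = η * T / 2 + Real.log d / η := by field_simp; ring
end
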